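/- If G and H are connected graphs of orders n, m ≥ 3 respectively, then max{Δ(G)+m, Δ(H)+1} ≤ χ'_D(G∘H) ≤ max{χ'_D(G), χ'_D(H)} + m. -/

import Mathlib

open SimpleGraph

/-- Two edges (as unordered pairs) are adjacent if they are distinct and share an endpoint. -/
def EdgesAdj {V : Type*} (e f : Sym2 V) : Prop := e ≠ f ∧ ∃ v, v ∈ e ∧ v ∈ f

/-- A proper edge labeling: adjacent edges of `G` receive different labels. -/
def IsProperEdgeLabeling {V : Type*} (G : SimpleGraph V) (c : Sym2 V → ℕ) : Prop :=
  ∀ e ∈ G.edgeSet, ∀ f ∈ G.edgeSet, EdgesAdj e f → c e ≠ c f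

/-- An automorphism `φ` of `G` preserves the edge labeling `c`. -/
def PreservesEdgeLabeling {V : Type*} (G : SimpleGraph V) (φ : G ≃g G) (c : Sym2 V → ℕ) : Prop :=
  ∀ e ∈ G.edgeSet, c (Sym2.map φ e) = c e

/-- A distinguishing edge labeling: only the identity automorphism preserves it. -/
def IsDistinguishingEdgeLabeling {V : Type*} (G : SimpleGraph V) (c : Sym2 V → ℕ) : Prop :=
  ∀ φ : G ≃g G, PreservesEdgeLabeling G φ c → ∀ v, φ v = v

/-- The chromatic index `χ'(G)`. -/
noncomputable def chromIndex {V : Type*} (G : SimpleGraph V) : ℕ :=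
  sInf {d | ∃ c : Sym2 V → ℕ, IsProperEdgeLabeling G c ∧ ∀ e ∈ G.edgeSet, c e < d}

/-- The distinguishing index `D'(G)`. -/
noncomputable def distIndex {V : Type*} (G : SimpleGraph V) : ℕ :=
  sInf {d | ∃ c : Sym2 V → ℕ, IsDistinguishingEdgeLabeling G c ∧ ∀ e ∈ G.edgeSet, c e < d}

/-- The distinguishing chromatic index `χ'_D(G)`. -/
noncomputable def distChromIndex {V : Type*} (G : SimpleGraph V) : ℕ :=
  sInf {d | ∃ c : Sym2 V → ℕ, IsProperEdgeLabeling G c ∧ IsDistinguishingEdgeLabeling G c ∧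
      ∀ e ∈ G.edgeSet, c e < d}

/-- The corona product `G ∘ H`: one copy of `G` and, for each vertex `i` of `G`, a copy of `H`
whose vertices are all joined to `i`. -/
def coronaProd {α β : Type*} (G : SimpleGraph α) (H : SimpleGraph β) :
    SimpleGraph (α ⊕ α × β) where
  Adj x y :=
    Sum.elim (fun v => Sum.elim (fun w => G.Adj v w) (fun p => v = p.1) y)
             (fun p => Sum.elim (fun w => p.1 = w) (fun q => p.1 = q.1 ∧ H.Adj p.2 q.2) y) x
  symm := by constructor; rintro (v|p) (w|q) h
             · exact h.symm
             · exact h.symm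
             · exact h.symm
             · exact ⟨h.1.symm, h.2.symm⟩
  loopless := by constructor; rintro (v|p) h
                 · exact G.loopless.irrefl v h
                 · exact H.loopless.irrefl p.2 h.2

section AuxLemmas
variable {V : Type*}

lemma pointwise_of_isProper {G : SimpleGraph V} {c : Sym2 V → ℕ}
    (h : IsProperEdgeLabeling G c) {x a b : V} (ha : G.Adj x a) (hb : G.Adj x b)
    (hab : a ≠ b) : c s(x, a) ≠ c s(x, b) := by
  apply h _ (G.mem_edgeSet.mpr ha) _ (G.mem_edgeSet.mpr hb)
  refine ⟨?_, x, Sym2.mem_mk_left _ _, Sym2.mem_mk_left _ _⟩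
  intro he
  rw [Sym2.eq_iff] at he
  rcases he with ⟨-, h1⟩ | ⟨h1, -⟩
  · exact hab h1
  · exact G.ne_of_adj hb h1

lemma isProper_of_pointwise {G : SimpleGraph V} {c : Sym2 V → ℕ}
    (h : ∀ x a b : V, G.Adj x a → G.Adj x b → a ≠ b → c s(x, a) ≠ c s(x, b)) :
    IsProperEdgeLabeling G c := by
  rintro e he f hf ⟨hef, v, hve, hvf⟩
  obtain ⟨a, rfl⟩ := Sym2.mem_iff_exists.mp hve
  obtain ⟨b, rfl⟩ := Sym2.mem_iff_exists.mp hvf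
  have hab : a ≠ b := fun hh => hef (by rw [hh])
  exact h v a b (G.mem_edgeSet.mp he) (G.mem_edgeSet.mp hf) hab

lemma exists_adj_of_connected {G : SimpleGraph V} (hc : G.Connected) {v u : V} (hvu : v ≠ u) :
    ∃ w, G.Adj v w := by
  obtain ⟨p⟩ := hc.preconnected v u
  cases p with
  | nil => exact absurd rfl hvu
  | cons h _ => exact ⟨_, h⟩

lemma exists_boundary_edge {G : SimpleGraph V} (v w : V) {s u : V} (p : G.Walk s u) :
    (s = v ∨ s = w) → u ≠ v → u ≠ w → ∃ a b, (a = v ∨ a = w) ∧ b ≠ v ∧ b ≠ w ∧ G.Adj a b := by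
  induction p with
  | nil =>
    intro hs hu1 hu2
    rcases hs with rfl | rfl
    · exact absurd rfl hu1
    · exact absurd rfl hu2
  | @cons a x b h p ih =>
    intro hs hu1 hu2
    by_cases hx : x = v ∨ x = w
    · exact ih hx hu1 hu2
    · push_neg at hx
      exact ⟨a, x, hs, hx.1, hx.2, h⟩

lemma eq_of_fixes_edges {G : SimpleGraph V} [Fintype V] (hc : G.Connected)
    (hn : 3 ≤ Fintype.card V) (φ : G ≃g G)
    (hfix : ∀ e ∈ G.edgeSet, Sym2.map φ e = e) : ∀ x, φ x = x := by
  classical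
  intro x
  obtain ⟨y, hy⟩ := Fintype.exists_ne_of_one_lt_card (by omega) x
  obtain ⟨w, hw⟩ := exists_adj_of_connected hc (Ne.symm hy)
  have hfe := hfix s(x, w) (G.mem_edgeSet.mpr hw)
  rw [Sym2.map_pair_eq, Sym2.eq_iff] at hfe
  rcases hfe with ⟨h1, _⟩ | ⟨h1, h2⟩
  · exact h1
  · exfalso
    have hxw : x ≠ w := G.ne_of_adj hw
    have hex : ∃ u : V, u ≠ x ∧ u ≠ w := by
      by_contra hcon
      push_neg at hcon
      have hsub : (Finset.univ : Finset V) ⊆ {x, w} := by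
        intro z _
        by_cases hz : z = x
        · simp [hz]
        · simp [hcon z hz]
      have hle := Finset.card_le_card hsub
      have h2le : ({x, w} : Finset V).card ≤ 2 := Finset.card_insert_le _ _ |>.trans (by simp)
      rw [Finset.card_univ] at hle
      omega
    obtain ⟨u, hux, huw⟩ := hex
    obtain ⟨p⟩ := hc.preconnected x u
    obtain ⟨a, b, hab, hbx, hbw, hadj⟩ := exists_boundary_edge x w p (Or.inl rfl) hux huw
    have hfe2 := hfix s(a, b) (G.mem_edgeSet.mpr hadj)
    rw [Sym2.map_pair_eq, Sym2.eq_iff] at hfe2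
    rcases hab with rfl | rfl
    · rcases hfe2 with ⟨ha, _⟩ | ⟨ha, _⟩
      · exact hxw (ha.symm.trans h1)
      · exact hbw (ha.symm.trans h1)
    · rcases hfe2 with ⟨ha, _⟩ | ⟨ha, _⟩
      · exact hxw (ha.symm.trans h2).symm
      · exact hbx (ha.symm.trans h2)

lemma distChrom_spec {G : SimpleGraph V} [Fintype V] (hc : G.Connected)
    (hn : 3 ≤ Fintype.card V) :
    ∃ c : Sym2 V → ℕ, IsProperEdgeLabeling G c ∧ IsDistinguishingEdgeLabeling G c ∧
      ∀ e ∈ G.edgeSet, c e < distChromIndex G := by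
  classical
  have hmem : ∃ c : Sym2 V → ℕ, IsProperEdgeLabeling G c ∧ IsDistinguishingEdgeLabeling G c ∧
      ∀ e ∈ G.edgeSet, c e < Fintype.card (Sym2 V) := by
    refine ⟨fun e => (Fintype.equivFin (Sym2 V) e : ℕ), ?_, ?_, ?_⟩
    · intro e _ f _ hef h
      exact hef.1 ((Fintype.equivFin (Sym2 V)).injective (Fin.ext h))
    · intro φ hpres
      apply eq_of_fixes_edges hc hn φ
      intro e he
      exact (Fintype.equivFin (Sym2 V)).injective (Fin.ext (hpres e he))
    · intro e _
      exact (Fintype.equivFin (Sym2 V) e).isLt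
  exact Nat.sInf_mem (⟨Fintype.card (Sym2 V), hmem⟩ :
    Set.Nonempty {d | ∃ c : Sym2 V → ℕ, IsProperEdgeLabeling G c ∧
      IsDistinguishingEdgeLabeling G c ∧ ∀ e ∈ G.edgeSet, c e < d})

end AuxLemmas

/-- The function giving the labeling of the corona product. -/
def coronaFun {α β : Type*} (cG : Sym2 α → ℕ) (cH : Sym2 β → ℕ) (k : ℕ) (ι : β → ℕ) :
    (α ⊕ α × β) → (α ⊕ α × β) → ℕ
  | Sum.inl v, Sum.inl w => cG s(v, w)
  | Sum.inl _, Sum.inr p => k + ι p.2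
  | Sum.inr p, Sum.inl _ => k + ι p.2
  | Sum.inr p, Sum.inr q => cH s(p.2, q.2)

lemma coronaFun_symm {α β : Type*} (cG : Sym2 α → ℕ) (cH : Sym2 β → ℕ) (k : ℕ) (ι : β → ℕ) :
    ∀ x y, coronaFun cG cH k ι x y = coronaFun cG cH k ι y x := by
  rintro (v | p) (w | q)
  · exact congrArg cG Sym2.eq_swap
  · rfl
  · rfl
  · exact congrArg cH Sym2.eq_swap

/-- The labeling of the corona product, as a function on unordered pairs. -/
def coronaLabel {α β : Type*} (cG : Sym2 α → ℕ) (cH : Sym2 β → ℕ) (k : ℕ) (ι : β → ℕ) :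
    Sym2 (α ⊕ α × β) → ℕ :=
  Sym2.lift ⟨coronaFun cG cH k ι, coronaFun_symm cG cH k ι⟩

theorem stmt18 {α β : Type*} [Fintype α] [Fintype β]
    (G : SimpleGraph α) (H : SimpleGraph β) [DecidableRel G.Adj] [DecidableRel H.Adj]
    (hG : G.Connected) (hH : H.Connected)
    (hn : 3 ≤ Fintype.card α) (hm : 3 ≤ Fintype.card β) :
    max (G.maxDegree + Fintype.card β) (H.maxDegree + 1) ≤ distChromIndex (coronaProd G H) ∧
    distChromIndex (coronaProd G H) ≤
      max (distChromIndex G) (distChromIndex H) + Fintype.card β := by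
  classical
  obtain ⟨cG, hGp, hGd, hGb⟩ := distChrom_spec hG hn
  obtain ⟨cH, hHp, hHd, hHb⟩ := distChrom_spec hH hm
  have hnea : Nonempty α := Fintype.card_pos_iff.mp (by omega)
  set K := coronaProd G H with hKdef
  set m := Fintype.card β with hmdef
  set k := max (distChromIndex G) (distChromIndex H) with hkdef
  have hGk : ∀ e ∈ G.edgeSet, cG e < k := fun e he => lt_of_lt_of_le (hGb e he) (le_max_left _ _)
  have hHk : ∀ e ∈ H.edgeSet, cH e < k := fun e he => lt_of_lt_of_le (hHb e he) (le_max_right _ _)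
  set ι : β → ℕ := fun b => (Fintype.equivFin β b : ℕ) with hιdef
  have hι : Function.Injective ι := fun a b h => (Fintype.equivFin β).injective (Fin.ext h)
  have hιlt : ∀ b, ι b < m := fun b => (Fintype.equivFin β b).isLt
  set c := coronaLabel cG cH k ι with hcdef
  have hcll : ∀ (v w : α), c s(Sum.inl v, Sum.inl w) = cG s(v, w) := fun v w => rfl
  have hclr : ∀ (v : α) (p : α × β), c s(Sum.inl v, Sum.inr p) = k + ι p.2 := fun v p => rfl
  have hcrl : ∀ (p : α × β) (w : α), c s(Sum.inr p, Sum.inl w) = k + ι p.2 := fun p w => rfl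
  have hcrr : ∀ (p q : α × β), c s(Sum.inr p, Sum.inr q) = cH s(p.2, q.2) := fun p q => rfl
  -- pointwise properness
  have hpt : ∀ x a b, K.Adj x a → K.Adj x b → a ≠ b → c s(x, a) ≠ c s(x, b) := by
    rintro (v | p) (a | pa) (b | pb) hxa hxb hne
    · have hxa' : G.Adj v a := hxa
      have hxb' : G.Adj v b := hxb
      rw [hcll, hcll]
      exact pointwise_of_isProper hGp hxa' hxb' (fun h => hne (by rw [h]))
    · have hxa' : G.Adj v a := hxa
      rw [hcll, hclr]
      have := hGk _ (G.mem_edgeSet.mpr hxa')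
      omega
    · have hxb' : G.Adj v b := hxb
      rw [hclr, hcll]
      have := hGk _ (G.mem_edgeSet.mpr hxb')
      omega
    · have hxa' : v = pa.1 := hxa
      have hxb' : v = pb.1 := hxb
      rw [hclr, hclr]
      have hne2 : pa.2 ≠ pb.2 := fun h =>
        hne (congrArg Sum.inr (Prod.ext (hxa'.symm.trans hxb') h))
      intro h
      exact hne2 (hι (by omega))
    · have hxa' : p.1 = a := hxa
      have hxb' : p.1 = b := hxb
      exact absurd (congrArg Sum.inl (hxa'.symm.trans hxb')) hne
    · have hxb' : p.1 = pb.1 ∧ H.Adj p.2 pb.2 := hxb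
      rw [hcrl, hcrr]
      have := hHk _ (H.mem_edgeSet.mpr hxb'.2)
      omega
    · have hxa' : p.1 = pa.1 ∧ H.Adj p.2 pa.2 := hxa
      rw [hcrr, hcrl]
      have := hHk _ (H.mem_edgeSet.mpr hxa'.2)
      omega
    · have hxa' : p.1 = pa.1 ∧ H.Adj p.2 pa.2 := hxa
      have hxb' : p.1 = pb.1 ∧ H.Adj p.2 pb.2 := hxb
      rw [hcrr, hcrr]
      have hne2 : pa.2 ≠ pb.2 := fun h =>
        hne (congrArg Sum.inr (Prod.ext (hxa'.1.symm.trans hxb'.1) h))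
      exact pointwise_of_isProper hHp hxa'.2 hxb'.2 hne2
  have hproper : IsProperEdgeLabeling K c := isProper_of_pointwise hpt
  -- bound
  have hbound : ∀ e ∈ K.edgeSet, c e < k + m := by
    intro e
    induction e using Sym2.ind with
    | _ x y =>
      intro he
      have hadj : K.Adj x y := K.mem_edgeSet.mp he
      rcases x with v | p <;> rcases y with w | q
      · have h' : G.Adj v w := hadj
        rw [hcll]
        have := hGk _ (G.mem_edgeSet.mpr h')
        omega
      · rw [hclr]
        have := hιlt q.2
        omega
      · rw [hcrl]
        have := hιlt p.2
        omega
      · have h' : p.1 = q.1 ∧ H.Adj p.2 q.2 := hadj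
        rw [hcrr]
        have := hHk _ (H.mem_edgeSet.mpr h'.2)
        omega
  -- distinguishing
  have hdist : IsDistinguishingEdgeLabeling K c := by
    intro φ hpres
    have hpres' : ∀ (ψ : K ≃g K), PreservesEdgeLabeling K ψ c →
        ∀ x y, K.Adj x y → c s(ψ x, ψ y) = c s(x, y) := by
      intro ψ hψ x y hxy
      have := hψ s(x, y) (K.mem_edgeSet.mpr hxy)
      rwa [Sym2.map_pair_eq] at this
    have hApres := hpres' φ hpres
    have hsym : ∀ x y, K.Adj x y → c s(φ.symm x, φ.symm y) = c s(x, y) := by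
      intro x y hxy
      have hadj2 : K.Adj (φ.symm x) (φ.symm y) := φ.symm.map_adj_iff.mpr hxy
      have h3 := hApres _ _ hadj2
      rw [RelIso.apply_symm_apply, RelIso.apply_symm_apply] at h3
      exact h3.symm
    have key : ∀ (ψ : K ≃g K), (∀ x y, K.Adj x y → c s(ψ x, ψ y) = c s(x, y)) →
        ∀ v : α, ∃ w, ψ (Sum.inl v) = Sum.inl w := by
      intro ψ hψ v
      rcases hq : ψ (Sum.inl v) with w | p
      · exact ⟨w, rfl⟩
      · exfalso
        obtain ⟨b1, b2, hb12⟩ := Fintype.exists_pair_of_one_lt_card (α := β) (by omega)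
        have hstep : ∀ b : β, ι b = ι p.2 := by
          intro b
          have hadj : K.Adj (Sum.inl v) (Sum.inr (v, b)) := rfl
          have hadj2 : K.Adj (ψ (Sum.inl v)) (ψ (Sum.inr (v, b))) := ψ.map_adj_iff.mpr hadj
          have hlab := hψ _ _ hadj
          rw [hq] at hadj2 hlab
          rcases hy : ψ (Sum.inr (v, b)) with w' | q
          · rw [hy] at hlab
            rw [hcrl, hclr] at hlab
            have hsnd : ι (v, b).2 = ι b := rfl
            omega
          · rw [hy] at hadj2 hlab
            have hadj2' : p.1 = q.1 ∧ H.Adj p.2 q.2 := hadj2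
            rw [hcrr, hclr] at hlab
            have := hHk _ (H.mem_edgeSet.mpr hadj2'.2)
            omega
        have h12 := (hstep b1).trans (hstep b2).symm
        exact hb12 (hι h12)
    have keyφ := key φ hApres
    have keyψ := key φ.symm hsym
    choose g hg using keyφ
    have hginj : Function.Injective g := by
      intro a b hab
      have h1 : φ (Sum.inl a) = φ (Sum.inl b) := by rw [hg a, hg b, hab]
      exact Sum.inl.inj (φ.injective h1)
    have hgbij : Function.Bijective g := Finite.injective_iff_bijective.mp hginj
    have hadjg : ∀ a b : α, G.Adj (g a) (g b) ↔ G.Adj a b := by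
      intro a b
      have h1 := φ.map_adj_iff (v := Sum.inl a) (w := Sum.inl b)
      rw [hg a, hg b] at h1
      exact h1
    let gIso : G ≃g G := ⟨Equiv.ofBijective g hgbij, by intro a b; exact hadjg a b⟩
    have hgpres : PreservesEdgeLabeling G gIso cG := by
      intro e
      induction e using Sym2.ind with
      | _ a b =>
        intro he
        have hab : G.Adj a b := G.mem_edgeSet.mp he
        rw [Sym2.map_pair_eq]
        have h1 := hApres (Sum.inl a) (Sum.inl b) hab
        rw [hg a, hg b] at h1
        exact h1
    have hgid := hGd gIso hgpres
    have hφl : ∀ v : α, φ (Sum.inl v) = Sum.inl v := by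
      intro v
      rw [hg v]
      exact congrArg Sum.inl (hgid v)
    intro x
    rcases x with v | p
    · exact hφl v
    · rcases hq : φ (Sum.inr p) with w | q
      · exfalso
        obtain ⟨w', hw'⟩ := keyψ w
        rw [← hq, RelIso.symm_apply_apply] at hw'
        cases hw'
      · have hadj : K.Adj (Sum.inl p.1) (Sum.inr p) := rfl
        have hadj2 : K.Adj (φ (Sum.inl p.1)) (φ (Sum.inr p)) := φ.map_adj_iff.mpr hadj
        rw [hφl, hq] at hadj2
        have hadj2' : p.1 = q.1 := hadj2
        have hlab := hApres _ _ hadj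
        rw [hφl, hq] at hlab
        rw [hclr, hclr] at hlab
        have hsnd : q.2 = p.2 := hι (by omega)
        exact congrArg Sum.inr (Prod.ext hadj2'.symm hsnd)
  -- upper bound
  have hub : distChromIndex K ≤ k + m :=
    Nat.sInf_le (⟨c, hproper, hdist, hbound⟩ :
      (k + m) ∈ {d | ∃ c : Sym2 (α ⊕ α × β) → ℕ, IsProperEdgeLabeling K c ∧
        IsDistinguishingEdgeLabeling K c ∧ ∀ e ∈ K.edgeSet, c e < d})
  -- extract an optimal labeling for the lower bound
  have hmemS : ∃ c' : Sym2 (α ⊕ α × β) → ℕ, IsProperEdgeLabeling K c' ∧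
      IsDistinguishingEdgeLabeling K c' ∧ ∀ e ∈ K.edgeSet, c' e < distChromIndex K :=
    Nat.sInf_mem (⟨k + m, c, hproper, hdist, hbound⟩ :
      Set.Nonempty {d | ∃ c : Sym2 (α ⊕ α × β) → ℕ, IsProperEdgeLabeling K c ∧
        IsDistinguishingEdgeLabeling K c ∧ ∀ e ∈ K.edgeSet, c e < d})
  obtain ⟨c', hp', _, hbd'⟩ := hmemS
  have hlow1 : G.maxDegree + m ≤ distChromIndex K := by
    obtain ⟨v, hv⟩ := G.exists_maximal_degree_vertex
    let j : (↥(G.neighborSet v) ⊕ β) → α ⊕ α × β :=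
      Sum.elim (fun w => Sum.inl (w : α)) (fun b => Sum.inr (v, b))
    have hjadj : ∀ z, K.Adj (Sum.inl v) (j z) := by
      rintro (⟨w, hw⟩ | b)
      · exact hw
      · exact rfl
    have hjinj : Function.Injective j := by
      rintro (⟨w1, h1⟩ | b1) (⟨w2, h2⟩ | b2) h
      · simp only [j, Sum.elim_inl, Sum.inl.injEq] at h
        exact congrArg Sum.inl (Subtype.ext h)
      · simp [j] at h
      · simp [j] at h
      · simp only [j, Sum.elim_inr, Sum.inr.injEq, Prod.mk.injEq, true_and] at h
        exact congrArg Sum.inr h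
    let F : (↥(G.neighborSet v) ⊕ β) → Fin (distChromIndex K) := fun z =>
      ⟨c' s(Sum.inl v, j z), hbd' _ (K.mem_edgeSet.mpr (hjadj z))⟩
    have hFinj : Function.Injective F := by
      intro z1 z2 h
      by_contra hne2
      exact pointwise_of_isProper hp' (hjadj z1) (hjadj z2)
        (fun e => hne2 (hjinj e)) (congrArg Fin.val h)
    have hcard := Fintype.card_le_of_injective F hFinj
    rw [Fintype.card_sum, Fintype.card_fin, G.card_neighborSet_eq_degree] at hcard
    rw [hv, hmdef]
    exact hcard
  have hlow2 : H.maxDegree + 1 ≤ distChromIndex K := by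
    haveI : Nonempty β := Fintype.card_pos_iff.mp (by omega)
    obtain ⟨b, hvb⟩ := H.exists_maximal_degree_vertex
    obtain ⟨v0⟩ := hnea
    let j : (↥(H.neighborSet b) ⊕ Unit) → α ⊕ α × β :=
      Sum.elim (fun b' => Sum.inr (v0, (b' : β))) (fun _ => Sum.inl v0)
    have hjadj : ∀ z, K.Adj (Sum.inr (v0, b)) (j z) := by
      rintro (⟨b', hb'⟩ | u)
      · exact ⟨rfl, hb'⟩
      · exact rfl
    have hjinj : Function.Injective j := by
      rintro (⟨b1, h1⟩ | u1) (⟨b2, h2⟩ | u2) h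
      · simp only [j, Sum.elim_inl, Sum.inr.injEq, Prod.mk.injEq, true_and] at h
        exact congrArg Sum.inl (Subtype.ext h)
      · simp [j] at h
      · simp [j] at h
      · exact congrArg Sum.inr (Subsingleton.elim u1 u2)
    let F : (↥(H.neighborSet b) ⊕ Unit) → Fin (distChromIndex K) := fun z =>
      ⟨c' s(Sum.inr (v0, b), j z), hbd' _ (K.mem_edgeSet.mpr (hjadj z))⟩
    have hFinj : Function.Injective F := by
      intro z1 z2 h
      by_contra hne2
      exact pointwise_of_isProper hp' (hjadj z1) (hjadj z2)
        (fun e => hne2 (hjinj e)) (congrArg Fin.val h)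
    have hcard := Fintype.card_le_of_injective F hFinj
    rw [Fintype.card_sum, Fintype.card_fin, H.card_neighborSet_eq_degree] at hcard
    simp only [Fintype.card_unit] at hcard
    rw [hvb]
    exact hcard
  exact ⟨max_le hlow1 hlow2, hub⟩
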